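/- arXiv:2206.09539 — 2 statements merged into one kernel-verified Lean document; each statement's English description precedes it below -/
import Mathlib

section
/- Let v be C³ on the closure of K = (0,b) × (0,T) satisfying v_YY − 2 v_Yτ + p(Y) v = 0 with v(Y,0) = 1/2, and set V = v_τ. Then V satisfies the nonlinear equation V_YY − 2 V_Yτ + 4 V_Y(Y,0) V = 0 on K. -/
/-- Partial derivative in the first variable. -/
noncomputable def pd1 (f : ℝ → ℝ → ℝ) (x y : ℝ) : ℝ := deriv (fun x' => f x' y) x

/-- Partial derivative in the second variable. -/
noncomputable def pd2 (f : ℝ → ℝ → ℝ) (x y : ℝ) : ℝ := deriv (fun y' => f x y') y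

open Filter Set

private lemma stmt4aux1 (g : ℝ × ℝ → ℝ) (hg : Differentiable ℝ g) (x y : ℝ) :
    HasDerivAt (fun x' => g (x', y)) (fderiv ℝ g (x, y) (1, 0)) x :=
  (hg (x, y)).hasFDerivAt.comp_hasDerivAt x (HasDerivAt.prodMk (hasDerivAt_id x) (hasDerivAt_const x y))

private lemma stmt4aux2 (g : ℝ × ℝ → ℝ) (hg : Differentiable ℝ g) (x y : ℝ) :
    HasDerivAt (fun y' => g (x, y')) (fderiv ℝ g (x, y) (0, 1)) y :=
  (hg (x, y)).hasFDerivAt.comp_hasDerivAt y (HasDerivAt.prodMk (hasDerivAt_const y x) (hasDerivAt_id y))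

private lemma stmt4auxapp (g : ℝ × ℝ → ((ℝ × ℝ) →L[ℝ] ℝ)) (hg : Differentiable ℝ g) (w : ℝ × ℝ)
    (q u : ℝ × ℝ) : fderiv ℝ (fun q' => g q' w) q u = fderiv ℝ g q u w := by
  have h : HasFDerivAt (fun q' => g q' w)
      ((ContinuousLinearMap.apply ℝ ℝ w).comp (fderiv ℝ g q)) q :=
    (ContinuousLinearMap.apply ℝ ℝ w).hasFDerivAt.comp q (hg q).hasFDerivAt
  rw [h.fderiv]; rfl

private lemma stmt4auxC (g : ℝ × ℝ → ((ℝ × ℝ) →L[ℝ] ℝ)) {n : ℕ∞} (hg : ContDiff ℝ n g)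
    (w : ℝ × ℝ) : ContDiff ℝ n (fun q' => g q' w) :=
  (ContinuousLinearMap.apply ℝ ℝ w).contDiff.comp hg

private lemma stmt4auxsymm (g : ℝ × ℝ → ℝ) (hg : ContDiff ℝ 2 g) (q u w : ℝ × ℝ) :
    fderiv ℝ (fderiv ℝ g) q u w = fderiv ℝ (fderiv ℝ g) q w u := by
  have hd : Differentiable ℝ (fderiv ℝ g) :=
    (hg.fderiv_right (m := 1) (by norm_num)).differentiable (by norm_num)
  exact second_derivative_symmetric (fun y => ((hg.differentiable (by norm_num)) y).hasFDerivAt)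
    (hd q).hasFDerivAt u w

/-- If v is C³, solves v_YY − 2 v_Yτ + p(Y) v = 0 on K = (0,b)×(0,T) with
v(Y,0) = 1/2, then V = v_τ satisfies V_YY − 2 V_Yτ + 4 V_Y(Y,0) V = 0 on K. -/
theorem stmt4 (b T : ℝ) (hb : 0 < b) (hT : 0 < T)
    (v : ℝ → ℝ → ℝ) (p : ℝ → ℝ)
    (hv : ContDiff ℝ 3 (fun q : ℝ × ℝ => v q.1 q.2))
    (hinit : ∀ Y ∈ Set.Ioo (0:ℝ) b, v Y 0 = 1/2)
    (hpde : ∀ Y τ : ℝ, Y ∈ Set.Ioo (0:ℝ) b → τ ∈ Set.Ioo (0:ℝ) T →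
      pd1 (pd1 v) Y τ - 2 * pd2 (pd1 v) Y τ + p Y * v Y τ = 0)
    (V : ℝ → ℝ → ℝ) (hV : ∀ Y τ, V Y τ = pd2 v Y τ) :
    ∀ Y τ : ℝ, Y ∈ Set.Ioo (0:ℝ) b → τ ∈ Set.Ioo (0:ℝ) T →
      pd1 (pd1 V) Y τ - 2 * pd2 (pd1 V) Y τ + 4 * pd1 V Y 0 * V Y τ = 0 := by
  intro Y τ hY hτ
  set f : ℝ × ℝ → ℝ := fun q => v q.1 q.2 with hf_def
  have hf3 : ContDiff ℝ 3 f := hv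
  have hfd : Differentiable ℝ f := hf3.differentiable (by norm_num)
  have hf' : ContDiff ℝ 2 (fderiv ℝ f) := hf3.fderiv_right (m := 2) (by norm_num)
  have hf'd : Differentiable ℝ (fderiv ℝ f) := hf'.differentiable (by norm_num)
  set e1 : ℝ × ℝ := (1, 0) with he1
  set e2 : ℝ × ℝ := (0, 1) with he2
  set F1 : ℝ × ℝ → ℝ := fun q => fderiv ℝ f q e1 with hF1_def
  set F2 : ℝ × ℝ → ℝ := fun q => fderiv ℝ f q e2 with hF2_def
  have hF1 : ContDiff ℝ 2 F1 := stmt4auxC _ hf' e1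
  have hF2 : ContDiff ℝ 2 F2 := stmt4auxC _ hf' e2
  have hF1d : Differentiable ℝ F1 := hF1.differentiable (by norm_num)
  have hF2d : Differentiable ℝ F2 := hF2.differentiable (by norm_num)
  have hF1' : ContDiff ℝ 1 (fderiv ℝ F1) := hF1.fderiv_right (m := 1) (by norm_num)
  have hF1'd : Differentiable ℝ (fderiv ℝ F1) := hF1'.differentiable (by norm_num)
  -- pointwise identities for first partials
  have hpd1v : ∀ x y, pd1 v x y = F1 (x, y) := fun x y => (stmt4aux1 f hfd x y).deriv
  have hpd2v : ∀ x y, pd2 v x y = F2 (x, y) := fun x y => (stmt4aux2 f hfd x y).deriv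
  -- second-level: fderiv F1 q u = fderiv (fderiv f) q u e1, etc.
  have happ1 : ∀ q u, fderiv ℝ F1 q u = fderiv ℝ (fderiv ℝ f) q u e1 :=
    fun q u => stmt4auxapp (fderiv ℝ f) hf'd e1 q u
  have happ2 : ∀ q u, fderiv ℝ F2 q u = fderiv ℝ (fderiv ℝ f) q u e2 :=
    fun q u => stmt4auxapp (fderiv ℝ f) hf'd e2 q u
  have hsymm : ∀ q u w, fderiv ℝ (fderiv ℝ f) q u w = fderiv ℝ (fderiv ℝ f) q w u :=
    stmt4auxsymm f (hf3.of_le (by norm_num))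
  set F11 : ℝ × ℝ → ℝ := fun q => fderiv ℝ F1 q e1 with hF11_def
  set F12 : ℝ × ℝ → ℝ := fun q => fderiv ℝ F1 q e2 with hF12_def
  have hF11 : ContDiff ℝ 1 F11 := stmt4auxC _ hF1' e1
  have hF12 : ContDiff ℝ 1 F12 := stmt4auxC _ hF1' e2
  have hF11d : Differentiable ℝ F11 := hF11.differentiable (by norm_num)
  have hF12d : Differentiable ℝ F12 := hF12.differentiable (by norm_num)
  -- F21 = F12 via symmetry of the second derivative of f
  have hF21 : ∀ q, fderiv ℝ F2 q e1 = F12 q := by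
    intro q
    rw [happ2 q e1, hsymm q e1 e2, ← happ1 q e2]
  -- identities for iterated partials of v
  have hpd11v : ∀ x y, pd1 (pd1 v) x y = F11 (x, y) := by
    intro x y
    have : (fun x' => pd1 v x' y) = fun x' => F1 (x', y) := funext fun x' => hpd1v x' y
    show deriv (fun x' => pd1 v x' y) x = _
    rw [this]
    exact (stmt4aux1 F1 hF1d x y).deriv
  have hpd21v : ∀ x y, pd2 (pd1 v) x y = F12 (x, y) := by
    intro x y
    have : (fun y' => pd1 v x y') = fun y' => F1 (x, y') := funext fun y' => hpd1v x y'
    show deriv (fun y' => pd1 v x y') y = _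
    rw [this]
    exact (stmt4aux2 F1 hF1d x y).deriv
  -- pd1 V = F12
  have hpd1V : ∀ x y, pd1 V x y = F12 (x, y) := by
    intro x y
    have : (fun x' => V x' y) = fun x' => F2 (x', y) :=
      funext fun x' => (hV x' y).trans (hpd2v x' y)
    show deriv (fun x' => V x' y) x = _
    rw [this, (stmt4aux1 F2 hF2d x y).deriv]
    exact hF21 (x, y)
  -- goal's second-order terms
  have hA : pd1 (pd1 V) Y τ = fderiv ℝ (fderiv ℝ F1) (Y, τ) e2 e1 := by
    have h1 : (fun x' => pd1 V x' τ) = fun x' => F12 (x', τ) := funext fun x' => hpd1V x' τ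
    show deriv (fun x' => pd1 V x' τ) Y = _
    rw [h1, (stmt4aux1 F12 hF12d Y τ).deriv,
      stmt4auxapp (fderiv ℝ F1) hF1'd e2 (Y, τ) e1]
    exact stmt4auxsymm F1 hF1 (Y, τ) e1 e2
  have hB : pd2 (pd1 V) Y τ = fderiv ℝ (fderiv ℝ F1) (Y, τ) e2 e2 := by
    have h1 : (fun y' => pd1 V Y y') = fun y' => F12 (Y, y') := funext fun y' => hpd1V Y y'
    show deriv (fun y' => pd1 V Y y') τ = _
    rw [h1, (stmt4aux2 F12 hF12d Y τ).deriv]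
    exact stmt4auxapp (fderiv ℝ F1) hF1'd e2 (Y, τ) e2
  -- the function H(t) = v_YY - 2 v_Yτ + p(Y) v at (Y, t)
  set H : ℝ → ℝ := fun t => F11 (Y, t) - 2 * F12 (Y, t) + p Y * v Y t with hH_def
  have hH0 : ∀ t ∈ Set.Ioo (0:ℝ) T, H t = 0 := by
    intro t ht
    have := hpde Y t hY ht
    rwa [hpd11v Y t, hpd21v Y t] at this
  -- continuity of H
  have hι : Continuous (fun t : ℝ => ((Y, t) : ℝ × ℝ)) := continuous_const.prodMk continuous_id
  have hHc : Continuous H := by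
    have hvYc : Continuous (fun t => v Y t) := hf3.continuous.comp hι
    exact ((hF11.continuous.comp hι).sub (continuous_const.mul (hF12.continuous.comp hι))).add
      (continuous_const.mul hvYc)
  -- H 0 = 0 by continuity
  have hH0' : H 0 = 0 := by
    haveI : (nhdsWithin (0:ℝ) (Set.Ioo 0 T)).NeBot := by
      apply mem_closure_iff_nhdsWithin_neBot.mp
      rw [closure_Ioo hT.ne]
      exact ⟨le_refl 0, hT.le⟩
    have t1 : Tendsto H (nhdsWithin (0:ℝ) (Set.Ioo 0 T)) (nhds (H 0)) :=
      hHc.continuousAt.continuousWithinAt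
    have t2 : Tendsto H (nhdsWithin (0:ℝ) (Set.Ioo 0 T)) (nhds 0) :=
      tendsto_const_nhds.congr'
        (eventually_nhdsWithin_of_forall fun t ht => (hH0 t ht).symm)
    exact tendsto_nhds_unique t1 t2
  -- v_YY (Y, 0) = 0 since v(·,0) is constant near Y
  have hpd1v0 : ∀ x ∈ Set.Ioo (0:ℝ) b, pd1 v x 0 = 0 := by
    intro x hx
    have hev : (fun x' => v x' 0) =ᶠ[nhds x] fun _ => (1/2 : ℝ) := by
      filter_upwards [isOpen_Ioo.mem_nhds hx] with x' hx' using hinit x' hx'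
    show deriv (fun x' => v x' 0) x = 0
    rw [hev.deriv_eq, deriv_const]
  have hF110 : F11 (Y, 0) = 0 := by
    rw [← hpd11v Y 0]
    have hev : (fun x' => pd1 v x' 0) =ᶠ[nhds Y] fun _ => (0 : ℝ) := by
      filter_upwards [isOpen_Ioo.mem_nhds hY] with x' hx' using hpd1v0 x' hx'
    show deriv (fun x' => pd1 v x' 0) Y = 0
    rw [hev.deriv_eq, deriv_const]
  -- hence p Y = 4 * F12 (Y, 0)
  have hpY : p Y = 4 * F12 (Y, 0) := by
    have := hH0'
    rw [hH_def] at this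
    simp only [hF110, hinit Y hY] at this
    linarith
  -- differentiate H at τ
  have hvd : HasDerivAt (fun t => v Y t) (fderiv ℝ f (Y, τ) e2) τ := stmt4aux2 f hfd Y τ
  have hHd : HasDerivAt H
      (fderiv ℝ F11 (Y, τ) e2 - 2 * fderiv ℝ F12 (Y, τ) e2 + p Y * fderiv ℝ f (Y, τ) e2) τ :=
    (((stmt4aux2 F11 hF11d Y τ).sub ((stmt4aux2 F12 hF12d Y τ).const_mul 2)).add
      (hvd.const_mul (p Y)))
  have hderivH : deriv H τ = 0 := by
    have hev : H =ᶠ[nhds τ] fun _ => (0 : ℝ) := by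
      filter_upwards [isOpen_Ioo.mem_nhds hτ] with t ht using hH0 t ht
    rw [hev.deriv_eq, deriv_const]
  have hkey : fderiv ℝ F11 (Y, τ) e2 - 2 * fderiv ℝ F12 (Y, τ) e2
      + p Y * fderiv ℝ f (Y, τ) e2 = 0 := by
    rw [← hHd.deriv]; exact hderivH
  -- translate the derivatives
  have e11 : fderiv ℝ F11 (Y, τ) e2 = fderiv ℝ (fderiv ℝ F1) (Y, τ) e2 e1 :=
    stmt4auxapp (fderiv ℝ F1) hF1'd e1 (Y, τ) e2
  have e12 : fderiv ℝ F12 (Y, τ) e2 = fderiv ℝ (fderiv ℝ F1) (Y, τ) e2 e2 :=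
    stmt4auxapp (fderiv ℝ F1) hF1'd e2 (Y, τ) e2
  have hVYτ : V Y τ = fderiv ℝ f (Y, τ) e2 := (hV Y τ).trans (hpd2v Y τ)
  rw [hA, hB, hpd1V Y 0, ← hpY, hVYτ]
  rw [e11, e12] at hkey
  linarith
end

section
/- Let u : ℝ × [0,∞) → ℝ be a C² solution of c̃(X) u_ττ = u_XX where c̃ is C¹ and positive, let Y(X) = ∫₀^X √(c̃(s)) ds with inverse X(Y), and define w(Y,τ) = u(X(Y),τ) · c̃(X(Y))^{1/4}. Then, with Q(Y) = c̃(X(Y))^{−1/4} and p(Y) = Q″(Y)/Q(Y) − 2(Q′(Y)/Q(Y))², assuming c̃ is C³ so that Q is C², w satisfies w_ττ = w_YY + p(Y) w. -/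
private lemma hasDerivAt_fst' {f : ℝ × ℝ → ℝ} {x y : ℝ}
    (hf : DifferentiableAt ℝ f (x, y)) :
    HasDerivAt (fun x' => f (x', y)) (fderiv ℝ f (x, y) (1, 0)) x := by
  have h1 : HasDerivAt (fun x' : ℝ => (x', y)) ((1:ℝ), (0:ℝ)) x :=
    (hasDerivAt_id x).prodMk (hasDerivAt_const x y)
  exact hf.hasFDerivAt.comp_hasDerivAt x h1

private lemma hasDerivAt_snd' {f : ℝ × ℝ → ℝ} {x y : ℝ}
    (hf : DifferentiableAt ℝ f (x, y)) :
    HasDerivAt (fun y' => f (x, y')) (fderiv ℝ f (x, y) (0, 1)) y := by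
  have h1 : HasDerivAt (fun y' : ℝ => (x, y')) ((0:ℝ), (1:ℝ)) y :=
    (hasDerivAt_const y x).prodMk (hasDerivAt_id y)
  exact hf.hasFDerivAt.comp_hasDerivAt y h1

/-- Liouville transform: the travel-time substitution Y(X) = ∫₀^X √c̃ together with
the amplitude factor c̃^{1/4} converts c̃(X) u_ττ = u_XX into w_ττ = w_YY + p(Y) w,
where Q(Y) = c̃(X(Y))^{−1/4} and p = Q″/Q − 2(Q′/Q)². -/
theorem stmt11 (ct : ℝ → ℝ) (hct : ContDiff ℝ 3 ct) (hpos : ∀ x, 0 < ct x)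
    (u : ℝ → ℝ → ℝ) (hu : ContDiff ℝ 2 (fun q : ℝ × ℝ => u q.1 q.2))
    (hpde : ∀ X τ : ℝ, ct X * pd2 (pd2 u) X τ = pd1 (pd1 u) X τ)
    (Yf Xf : ℝ → ℝ)
    (hYf : ∀ X, Yf X = ∫ s in (0:ℝ)..X, Real.sqrt (ct s))
    (hinv1 : ∀ X, Xf (Yf X) = X) (hinv2 : ∀ Y, Yf (Xf Y) = Y)
    (w : ℝ → ℝ → ℝ) (hw : ∀ Y τ, w Y τ = u (Xf Y) τ * (ct (Xf Y)) ^ ((1:ℝ)/4))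
    (Q p : ℝ → ℝ) (hQ : ∀ Y, Q Y = (ct (Xf Y)) ^ (-(1:ℝ)/4))
    (hp : ∀ Y, p Y = deriv (deriv Q) Y / Q Y - 2 * (deriv Q Y / Q Y)^2) :
    ∀ Y τ : ℝ, pd2 (pd2 w) Y τ = pd1 (pd1 w) Y τ + p Y * w Y τ := by
  -- two-variable function and its partials
  set F : ℝ × ℝ → ℝ := fun q => u q.1 q.2 with hF
  have hFdiff : Differentiable ℝ F := hu.differentiable (by norm_num)
  have hfd : ContDiff ℝ 1 (fun q => fderiv ℝ F q) := hu.fderiv_right (by norm_num)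
  set G1 : ℝ × ℝ → ℝ := fun q => fderiv ℝ F q (1, 0) with hG1def
  set G2 : ℝ × ℝ → ℝ := fun q => fderiv ℝ F q (0, 1) with hG2def
  have hG1diff : Differentiable ℝ G1 :=
    (hfd.clm_apply contDiff_const).differentiable one_ne_zero
  have hG2diff : Differentiable ℝ G2 :=
    (hfd.clm_apply contDiff_const).differentiable one_ne_zero
  have hux : ∀ X τ : ℝ, HasDerivAt (fun X' => u X' τ) (G1 (X, τ)) X :=
    fun X τ => hasDerivAt_fst' (hFdiff (X, τ))
  have hut : ∀ X τ : ℝ, HasDerivAt (fun t => u X t) (G2 (X, τ)) τ :=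
    fun X τ => hasDerivAt_snd' (hFdiff (X, τ))
  have pd1_eq : ∀ X τ : ℝ, pd1 u X τ = G1 (X, τ) := fun X τ => (hux X τ).deriv
  have pd2_eq : ∀ X τ : ℝ, pd2 u X τ = G2 (X, τ) := fun X τ => (hut X τ).deriv
  have pd11 : ∀ X τ : ℝ, pd1 (pd1 u) X τ = fderiv ℝ G1 (X, τ) (1, 0) := by
    intro X τ
    have : (fun X' => pd1 u X' τ) = fun X' => G1 (X', τ) :=
      funext fun X' => pd1_eq X' τ
    rw [pd1, this]
    exact (hasDerivAt_fst' (hG1diff (X, τ))).deriv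
  have pd22 : ∀ X τ : ℝ, pd2 (pd2 u) X τ = fderiv ℝ G2 (X, τ) (0, 1) := by
    intro X τ
    have : (fun t => pd2 u X t) = fun t => G2 (X, t) :=
      funext fun t => pd2_eq X t
    rw [pd2, this]
    exact (hasDerivAt_snd' (hG2diff (X, τ))).deriv
  -- derivative of Yf and inverse function Xf
  have hctc : Continuous ct := hct.continuous
  have contSqrt : Continuous (fun s => Real.sqrt (ct s)) :=
    Real.continuous_sqrt.comp hctc
  have hYd : ∀ X, HasDerivAt Yf (Real.sqrt (ct X)) X := by
    intro X
    have h := intervalIntegral.integral_hasDerivAt_right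
      (f := fun s => Real.sqrt (ct s)) (a := (0:ℝ)) (b := X)
      (contSqrt.intervalIntegrable 0 X)
      (contSqrt.stronglyMeasurableAtFilter _ _)
      contSqrt.continuousAt
    exact h.congr_of_eventuallyEq (Filter.Eventually.of_forall fun x => hYf x)
  have sqrtpos : ∀ X, 0 < Real.sqrt (ct X) := fun X => Real.sqrt_pos.2 (hpos X)
  have hmono : StrictMono Yf := by
    apply strictMono_of_deriv_pos
    intro x
    rw [(hYd x).deriv]
    exact sqrtpos x
  have hsurj : Function.Surjective Yf := fun Y => ⟨Xf Y, hinv2 Y⟩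
  have hXcont : Continuous Xf := by
    have hXe : Xf = ⇑(StrictMono.orderIsoOfSurjective Yf hmono hsurj).symm := by
      funext Y
      apply hmono.injective
      rw [hinv2]
      have h1 := (StrictMono.orderIsoOfSurjective Yf hmono hsurj).apply_symm_apply Y
      have h2 := congrFun (StrictMono.coe_orderIsoOfSurjective Yf hmono hsurj)
        ((StrictMono.orderIsoOfSurjective Yf hmono hsurj).symm Y)
      exact h1.symm.trans h2
    rw [hXe]
    exact (StrictMono.orderIsoOfSurjective Yf hmono hsurj).symm.continuous
  have hXd : ∀ Y, HasDerivAt Xf ((Real.sqrt (ct (Xf Y)))⁻¹) Y := fun Y =>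
    HasDerivAt.of_local_left_inverse hXcont.continuousAt (hYd (Xf Y))
      (ne_of_gt (sqrtpos (Xf Y))) (Filter.Eventually.of_forall hinv2)
  -- named auxiliary functions
  set g : ℝ → ℝ := fun Y => ct (Xf Y) with hgdef
  have hgpos : ∀ Y, 0 < g Y := fun Y => hpos _
  set s : ℝ → ℝ := fun Y => Real.sqrt (g Y) with hsdef
  have hspos : ∀ Y, 0 < s Y := fun Y => Real.sqrt_pos.2 (hgpos Y)
  set X' : ℝ → ℝ := fun Y => (s Y)⁻¹ with hX'def
  have hXd' : ∀ Y, HasDerivAt Xf (X' Y) Y := hXd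
  have hct1 : Differentiable ℝ ct := hct.differentiable (by norm_num)
  have hct2 : Differentiable ℝ (deriv ct) := by
    have h2 : ContDiff ℝ 2 (deriv ct) := by
      rw [show (3:WithTop ℕ∞) = 2 + 1 by norm_num] at hct
      exact (contDiff_succ_iff_deriv.mp hct).2.2
    exact h2.differentiable (by norm_num)
  -- derivatives of g, s, X'
  set g' : ℝ → ℝ := fun Y => deriv ct (Xf Y) * X' Y with hg'def
  have hgd : ∀ Y, HasDerivAt g (g' Y) Y := fun Y =>
    (hct1 (Xf Y)).hasDerivAt.comp Y (hXd Y)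
  set s' : ℝ → ℝ := fun Y => 1 / (2 * s Y) * g' Y with hs'def
  have hsd : ∀ Y, HasDerivAt s (s' Y) Y := fun Y =>
    (Real.hasDerivAt_sqrt (ne_of_gt (hgpos Y))).comp Y (hgd Y)
  set X'' : ℝ → ℝ := fun Y => -s' Y / s Y ^ 2 with hX''def
  have hXdd : ∀ Y, HasDerivAt X' (X'' Y) Y := fun Y =>
    (hsd Y).inv (ne_of_gt (hspos Y))
  set g'' : ℝ → ℝ := fun Y => deriv (deriv ct) (Xf Y) * X' Y * X' Y
      + deriv ct (Xf Y) * X'' Y with hg''def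
  have hgdd : ∀ Y, HasDerivAt g' (g'' Y) Y := fun Y =>
    ((hct2 (Xf Y)).hasDerivAt.comp Y (hXd Y)).mul (hXdd Y)
  -- the amplitude A and its derivatives
  set A : ℝ → ℝ := fun Y => (g Y) ^ ((1:ℝ)/4) with hAdef
  have hApos : ∀ Y, 0 < A Y := fun Y => Real.rpow_pos_of_pos (hgpos Y) _
  set A' : ℝ → ℝ := fun Y => (1:ℝ)/4 * g Y ^ ((1:ℝ)/4 - 1) * g' Y with hA'def
  have hAd : ∀ Y, HasDerivAt A (A' Y) Y := fun Y =>
    (Real.hasDerivAt_rpow_const (p := (1:ℝ)/4)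
      (Or.inl (ne_of_gt (hgpos Y)))).comp Y (hgd Y)
  set A'' : ℝ → ℝ := fun Y =>
      (1:ℝ)/4 * (((1:ℝ)/4 - 1) * g Y ^ ((1:ℝ)/4 - 1 - 1) * g' Y) * g' Y
      + (1:ℝ)/4 * g Y ^ ((1:ℝ)/4 - 1) * g'' Y with hA''def
  have hAdd : ∀ Y, HasDerivAt A' (A'' Y) Y := by
    intro Y
    have h1 : HasDerivAt (fun Y => g Y ^ ((1:ℝ)/4 - 1))
        (((1:ℝ)/4 - 1) * g Y ^ ((1:ℝ)/4 - 1 - 1) * g' Y) Y :=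
      (Real.hasDerivAt_rpow_const (p := (1:ℝ)/4 - 1)
        (Or.inl (ne_of_gt (hgpos Y)))).comp Y (hgd Y)
    exact (h1.const_mul ((1:ℝ)/4)).mul (hgdd Y)
  -- Q in terms of A
  have hQA : ∀ Y, Q Y = (A Y)⁻¹ := by
    intro Y
    rw [hQ, show (-(1:ℝ)/4) = -((1:ℝ)/4) by norm_num,
      Real.rpow_neg (hpos (Xf Y)).le]
  have hQd : ∀ Y, HasDerivAt Q (-A' Y / A Y ^ 2) Y := fun Y =>
    ((hAd Y).inv (ne_of_gt (hApos Y))).congr_of_eventuallyEq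
      (Filter.Eventually.of_forall hQA)
  have derivQ : deriv Q = fun Y => -A' Y / A Y ^ 2 := funext fun Y => (hQd Y).deriv
  have hQdd : ∀ Y, HasDerivAt (deriv Q)
      ((-A'' Y * A Y ^ 2 - -A' Y * ((2:ℝ) * A Y ^ (2-1) * A' Y)) / (A Y ^ 2) ^ 2) Y := by
    intro Y
    have h := ((hAdd Y).neg.div ((hAd Y).pow 2) (pow_ne_zero 2 (ne_of_gt (hApos Y))))
    exact h.congr_of_eventuallyEq (Filter.Eventually.of_forall fun z => by rw [derivQ]; rfl)
  -- p = -A''/A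
  have hpA : ∀ Y, p Y = -A'' Y / A Y := by
    intro Y
    rw [hp, (hQdd Y).deriv, derivQ, hQA]
    have ha := (hApos Y).ne'
    field_simp
    ring
  -- algebraic relations
  have hsA : ∀ Y, s Y = A Y ^ 2 := by
    intro Y
    show Real.sqrt (g Y) = (g Y ^ ((1:ℝ)/4)) ^ 2
    rw [sq, ← Real.rpow_add (hgpos Y), Real.sqrt_eq_rpow]
    norm_num
  have hgA : ∀ Y, g Y = A Y ^ 4 := by
    intro Y
    have h1 : s Y ^ 2 = g Y := Real.sq_sqrt (hgpos Y).le
    rw [← h1, hsA]; ring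
  have e1 : ∀ Y, g Y ^ ((1:ℝ)/4 - 1) = A Y / g Y := by
    intro Y
    have h : A Y / g Y = g Y ^ ((1:ℝ)/4) * g Y ^ (-1:ℝ) := by
      rw [Real.rpow_neg_one, div_eq_mul_inv]
    rw [h, ← Real.rpow_add (hgpos Y)]
    norm_num
  -- derivatives of w in τ
  have hwt : ∀ Y τ, pd2 w Y τ = G2 (Xf Y, τ) * A Y := by
    intro Y τ
    exact (((hut (Xf Y) τ).mul_const (A Y)).congr_of_eventuallyEq
      (Filter.Eventually.of_forall fun t => hw Y t)).deriv
  have hwtt : ∀ Y τ, pd2 (pd2 w) Y τ = pd2 (pd2 u) (Xf Y) τ * A Y := by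
    intro Y τ
    have hG2t : HasDerivAt (fun t => G2 (Xf Y, t))
        (fderiv ℝ G2 (Xf Y, τ) (0,1)) τ := hasDerivAt_snd' (hG2diff _)
    have h : HasDerivAt (fun t => pd2 w Y t)
        (fderiv ℝ G2 (Xf Y, τ) (0,1) * A Y) τ :=
      (hG2t.mul_const (A Y)).congr_of_eventuallyEq
        (Filter.Eventually.of_forall fun t => hwt Y t)
    rw [pd2, h.deriv, pd22]
  -- derivatives of w in Y
  have hwY : ∀ Y τ, pd1 w Y τ = G1 (Xf Y, τ) * X' Y * A Y + u (Xf Y) τ * A' Y := by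
    intro Y τ
    have h1 : HasDerivAt (fun Y' => u (Xf Y') τ) (G1 (Xf Y, τ) * X' Y) Y :=
      (hux (Xf Y) τ).comp Y (hXd Y)
    exact ((h1.mul (hAd Y)).congr_of_eventuallyEq
      (Filter.Eventually.of_forall fun Y' => hw Y' τ)).deriv
  have hwYY : ∀ Y τ, pd1 (pd1 w) Y τ =
      (fderiv ℝ G1 (Xf Y, τ) (1,0) * X' Y * X' Y + G1 (Xf Y, τ) * X'' Y) * A Y
        + G1 (Xf Y, τ) * X' Y * A' Y
        + (G1 (Xf Y, τ) * X' Y * A' Y + u (Xf Y) τ * A'' Y) := by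
    intro Y τ
    have hb : HasDerivAt (fun Y' => G1 (Xf Y', τ))
        (fderiv ℝ G1 (Xf Y, τ) (1,0) * X' Y) Y :=
      (hasDerivAt_fst' (hG1diff (Xf Y, τ))).comp Y (hXd Y)
    have hterm1 : HasDerivAt (fun Y' => G1 (Xf Y', τ) * X' Y' * A Y')
        ((fderiv ℝ G1 (Xf Y, τ) (1,0) * X' Y * X' Y + G1 (Xf Y, τ) * X'' Y) * A Y
          + G1 (Xf Y, τ) * X' Y * A' Y) Y :=
      (hb.mul (hXdd Y)).mul (hAd Y)
    have hterm2 : HasDerivAt (fun Y' => u (Xf Y') τ * A' Y')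
        (G1 (Xf Y, τ) * X' Y * A' Y + u (Xf Y) τ * A'' Y) Y :=
      ((hux (Xf Y) τ).comp Y (hXd Y)).mul (hAdd Y)
    exact ((hterm1.add hterm2).congr_of_eventuallyEq
      (Filter.Eventually.of_forall fun Y' => hwY Y' τ)).deriv
  -- final assembly
  intro Y τ
  have hctg : ct (Xf Y) = g Y := rfl
  have hAct : (ct (Xf Y) : ℝ) ^ ((1:ℝ)/4) = A Y := rfl
  have hpde' : g Y * pd2 (pd2 u) (Xf Y) τ = pd1 (pd1 u) (Xf Y) τ := hpde (Xf Y) τ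
  rw [hwtt, hwYY, hpA, hw, hAct, ← pd11, ← hpde']
  simp only [hX''def, hs'def, hX'def, hA'def]
  rw [e1 Y, hsA Y, hgA Y]
  have ha := (hApos Y).ne'
  field_simp
  ring
end
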